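/- Correctness of symmetry-reduced component-wise exploration: with R = ⋃ R_i invariant under symmetry group G and abstraction α mapping states to orbit representatives, the fixpoint of the component-wise iteration Z ↦ Z ∪ α(post_{R_i}(Z)) (cycling over all i until stabilization, starting from α(Init)) equals { rep([s]) : s reachable from Init via R }. -/

import Mathlib

section aux
variable {S : Type*} {n : ℕ} (Rc : Fin n → S → S → Prop) (rep : S → S)

/-- one step of the componentwise iteration -/
def symStep (W : Set S) (i : Fin n) : Set S :=
  W ∪ rep '' {t : S | ∃ z ∈ W, Rc i z t}

lemma symStep_mono {Z W : Set S} (h : Z ⊆ W) (i : Fin n) :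
    symStep Rc rep Z i ⊆ symStep Rc rep W i := by
  refine Set.union_subset_union h (Set.image_mono ?_)
  rintro t ⟨z, hz, hr⟩
  exact ⟨z, h hz, hr⟩

lemma subset_symFoldl (l : List (Fin n)) (Z : Set S) :
    Z ⊆ l.foldl (symStep Rc rep) Z := by
  induction l generalizing Z with
  | nil => simp
  | cons i l ih =>
    exact (Set.subset_union_left).trans (ih (symStep Rc rep Z i))

lemma image_subset_symFoldl (l : List (Fin n)) (Z : Set S) {i : Fin n}
    (hi : i ∈ l) :
    rep '' {t : S | ∃ z ∈ Z, Rc i z t} ⊆ l.foldl (symStep Rc rep) Z := by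
  induction l generalizing Z with
  | nil => simp at hi
  | cons j l ih =>
    rcases List.mem_cons.mp hi with rfl | hi
    · calc rep '' {t | ∃ z ∈ Z, Rc i z t} ⊆ symStep Rc rep Z i :=
            Set.subset_union_right
        _ ⊆ _ := subset_symFoldl Rc rep l _
    · refine (?_ : _ ⊆ rep '' {t : S | ∃ z ∈ symStep Rc rep Z j, Rc i z t}).trans
        (ih _ hi)
      refine Set.image_mono ?_
      rintro t ⟨z, hz, hr⟩
      exact ⟨z, Set.subset_union_left hz, hr⟩

lemma symFoldl_subset (l : List (Fin n)) {Z C : Set S} (hZ : Z ⊆ C)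
    (hC : ∀ W, W ⊆ C → ∀ i : Fin n, rep '' {t : S | ∃ z ∈ W, Rc i z t} ⊆ C) :
    l.foldl (symStep Rc rep) Z ⊆ C := by
  induction l generalizing Z with
  | nil => simpa
  | cons i l ih => exact ih (Set.union_subset hZ (hC Z hZ i))

end aux

/-- One round of symmetry-reduced component-wise exploration: for each
component `i` in turn, add the representatives of the `R_i`-successors. -/
def symRound {S : Type*} {n : ℕ} (Rc : Fin n → S → S → Prop) (rep : S → S)
    (Z : Set S) : Set S :=
  (List.finRange n).foldl
    (fun W i => W ∪ rep '' {t : S | ∃ z ∈ W, Rc i z t}) Z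

/-- Correctness of symmetry-reduced component-wise exploration: with
`R = ⋃ R_i` invariant under the symmetry group `G` and abstraction
`α T = rep '' T`, the componentwise iteration starting from `α(Init)` and
cycling over all components stabilizes, and its fixpoint equals
`{ rep s : s reachable from Init via R }`. -/
theorem sym_componentwise_exploration_correct {S : Type*} [Finite S] {n : ℕ}
    (G : Subgroup (Equiv.Perm S)) (Rc : Fin n → S → S → Prop) (Init : Set S)
    (rep : S → S)
    (hrep_orbit : ∀ s : S, ∃ π ∈ G, rep s = π s)
    (hrep_inv : ∀ π ∈ G, ∀ s : S, rep (π s) = rep s)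
    (hR : ∀ π ∈ G, ∀ s t : S,
      (∃ i : Fin n, Rc i s t) ↔ (∃ i : Fin n, Rc i (π s) (π t)))
    (hInit : ∀ π ∈ G, (π : S → S) '' Init = Init)
    (g : ℕ → Set S) (hg0 : g 0 = rep '' Init)
    (hgs : ∀ k : ℕ, g (k + 1) = symRound Rc rep (g k)) :
    (∃ k : ℕ, g k = g (k + 1)) ∧
      ∀ k : ℕ, g k = g (k + 1) →
        g k = {t : S | ∃ s : S,
          (∃ s0 ∈ Init,
            Relation.ReflTransGen (fun a b : S => ∃ i : Fin n, Rc i a b) s0 s) ∧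
          t = rep s} := by
  have hsym : ∀ Z : Set S,
      symRound Rc rep Z = (List.finRange n).foldl (symStep Rc rep) Z :=
    fun _ => rfl
  set Target : Set S := {t : S | ∃ s : S,
      (∃ s0 ∈ Init,
        Relation.ReflTransGen (fun a b : S => ∃ i : Fin n, Rc i a b) s0 s) ∧
      t = rep s} with hTarget
  have hmono : ∀ k, g k ⊆ g (k + 1) := by
    intro k
    rw [hgs k, hsym]
    exact subset_symFoldl Rc rep _ _
  have hmono' : ∀ j k, j ≤ k → g j ⊆ g k := by
    intro j k h
    induction h with
    | refl => exact le_refl _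
    | step _ ih => exact ih.trans (hmono _)
  constructor
  · by_contra h
    push_neg at h
    have hstrict : ∀ k, (g k).ncard < (g (k + 1)).ncard := fun k =>
      Set.ncard_lt_ncard (ssubset_of_subset_of_ne (hmono k) (h k))
        (Set.toFinite _)
    have hle : ∀ k, k ≤ (g k).ncard := by
      intro k
      induction k with
      | zero => simp
      | succ k ih => exact lt_of_le_of_lt ih (hstrict k)
    have h1 := hle (Nat.card S + 1)
    have h2 : (g (Nat.card S + 1)).ncard ≤ Nat.card S := by
      simpa [Set.ncard_univ] using
        Set.ncard_le_ncard (Set.subset_univ _) Set.finite_univ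
    omega
  · intro k hfix
    -- the closure property of Target under one abstract step
    have hstep : ∀ W : Set S, W ⊆ Target → ∀ i : Fin n,
        rep '' {t : S | ∃ z ∈ W, Rc i z t} ⊆ Target := by
      rintro W hW i _ ⟨t, ⟨z, hz, hr⟩, rfl⟩
      obtain ⟨s, hsreach, rfl⟩ := hW hz
      obtain ⟨π, hπ, hπs⟩ := hrep_orbit s
      have hπinv : π⁻¹ ∈ G := inv_mem hπ
      have h1 : ∃ j : Fin n, Rc j (π s) t := ⟨i, by rwa [hπs] at hr⟩
      have h2 : ∃ j : Fin n, Rc j s (π⁻¹ t) := by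
        have := (hR π⁻¹ hπinv (π s) t).mp h1
        simpa using this
      obtain ⟨s0, hs0, hreach⟩ := hsreach
      refine ⟨π⁻¹ t, ⟨s0, hs0, hreach.tail h2⟩, ?_⟩
      have := hrep_inv π⁻¹ hπinv t
      simpa using this.symm
    have hsub : ∀ m : ℕ, g m ⊆ Target := by
      intro m
      induction m with
      | zero =>
        rw [hg0]
        rintro _ ⟨s, hs, rfl⟩
        exact ⟨s, ⟨s, hs, Relation.ReflTransGen.refl⟩, rfl⟩
      | succ m ih =>
        rw [hgs m, hsym]
        exact symFoldl_subset Rc rep _ ih hstep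
    refine Set.Subset.antisymm (hsub k) ?_
    rintro _ ⟨s, ⟨s0, hs0, hreach⟩, rfl⟩
    -- show rep s ∈ g k by induction on reachability
    induction hreach with
    | refl =>
      exact hmono' 0 k (Nat.zero_le _) (hg0 ▸ ⟨s0, hs0, rfl⟩)
    | tail hab hbc ih =>
      rename_i b c
      have hb : rep b ∈ g k := ih
      obtain ⟨π, hπ, hπb⟩ := hrep_orbit b
      obtain ⟨j, hj⟩ := (hR π hπ b c).mp hbc
      have hc : π c ∈ {t : S | ∃ z ∈ g k, Rc j z t} := ⟨π b, hπb ▸ hb, hj⟩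
      have : rep (π c) ∈ g (k + 1) := by
        rw [hgs k, hsym]
        exact image_subset_symFoldl Rc rep _ _ (List.mem_finRange j)
          ⟨π c, hc, rfl⟩
      rw [hrep_inv π hπ c] at this
      exact hfix ▸ this
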